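/- Let q be a prime power, H = 𝔽_{q³}(T), σ the q-Frobenius automorphism of H over F = 𝔽_q(T), and take π = T. There is no triple (x_1, x_2, x_3) ∈ 𝔽_{q³}[T]³ with T ∣ x_2 and T ∣ x_3 such that M_{(x_1,x_2,x_3)}³ = T·I₃. -/

import Mathlib

/-- The twisted matrix `M_{(x₁,x₂,x₃)}` of the paper (rank `3`), over a commutative ring
with a ring endomorphism `σ` and parameter `π`. -/
noncomputable def M3 {R : Type*} [CommRing R] (σ : R →+* R) (π x₁ x₂ x₃ : R) :
    Matrix (Fin 3) (Fin 3) R :=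
  !![x₁, x₂, x₃;
     π * σ x₃, σ x₁, σ x₂;
     π * σ (σ x₂), π * σ (σ x₃), σ (σ x₁)]

open Polynomial in
set_option maxHeartbeats 1000000 in
/-- The degree-counting claim of Section 5.1: with `π = T` and `σ` the coefficientwise
`q`-Frobenius of `𝔽_{q³}[T]`, there is no triple `(x₁,x₂,x₃) ∈ 𝔽_{q³}[T]³` with `T ∣ x₂`
and `T ∣ x₃` such that `M_{(x₁,x₂,x₃)}³ = T·I₃`. -/
theorem stmt15 (p : ℕ) (hp : p.Prime) (e : ℕ) (he : 0 < e) (q : ℕ) (hq : q = p ^ e)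
    (Fqr : Type) [Field Fqr] [Fintype Fqr] (hcard : Fintype.card Fqr = q ^ 3)
    (σ₀ : Fqr →+* Fqr) (hσ₀ : ∀ a : Fqr, σ₀ a = a ^ q) :
    ¬ ∃ x₁ x₂ x₃ : Polynomial Fqr, (X : Polynomial Fqr) ∣ x₂ ∧ (X : Polynomial Fqr) ∣ x₃ ∧
      (M3 (Polynomial.mapRingHom σ₀) (X : Polynomial Fqr) x₁ x₂ x₃) ^ 3
        = (X : Polynomial Fqr) • (1 : Matrix (Fin 3) (Fin 3) (Polynomial Fqr)) := by
  rintro ⟨x₁, x₂, x₃, hx₂, hx₃, hM⟩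
  set σ := Polynomial.mapRingHom σ₀ with hσdef
  have hσdvd : ∀ r : Polynomial Fqr, X ∣ σ r ↔ X ∣ r := by
    intro r
    simp only [hσdef, Polynomial.X_dvd_iff, Polynomial.coe_mapRingHom, Polynomial.coeff_map]
    constructor
    · intro h; exact σ₀.injective (by rw [h, map_zero])
    · intro h; rw [h, map_zero]
  have hdet := congrArg Matrix.det hM
  rw [Matrix.det_pow, Matrix.det_smul, Matrix.det_one] at hdet
  simp only [Fintype.card_fin, mul_one] at hdet
  have hdetval : (M3 σ X x₁ x₂ x₃).det =
      x₁ * σ x₁ * σ (σ x₁) - x₁ * σ x₂ * (X * σ (σ x₃))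
      - x₂ * (X * σ x₃) * σ (σ x₁) + x₂ * σ x₂ * (X * σ (σ x₂))
      + x₃ * (X * σ x₃) * (X * σ (σ x₃)) - x₃ * σ x₁ * (X * σ (σ x₂)) := by
    simp [M3, Matrix.det_fin_three]
  have hXprime : Prime (X : Polynomial Fqr) := Polynomial.prime_X
  -- X divides det
  have hdvddet : (X : Polynomial Fqr) ∣ (M3 σ X x₁ x₂ x₃).det := by
    have : (X : Polynomial Fqr) ∣ (M3 σ X x₁ x₂ x₃).det ^ 3 := by
      rw [hdet]; exact dvd_pow_self _ (by norm_num)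
    exact hXprime.dvd_of_dvd_pow this
  -- hence X ∣ x₁
  have hx₁ : (X : Polynomial Fqr) ∣ x₁ := by
    have h1 : (X : Polynomial Fqr) ∣ x₁ * σ x₁ * σ (σ x₁) := by
      have h2 : (X : Polynomial Fqr) ∣ (M3 σ X x₁ x₂ x₃).det
          - (x₁ * σ x₁ * σ (σ x₁)) := by
        rw [hdetval]
        exact ⟨-(x₁ * σ x₂ * σ (σ x₃)) - x₂ * σ x₃ * σ (σ x₁)
          + x₂ * σ x₂ * σ (σ x₂) + x₃ * σ x₃ * (X * σ (σ x₃))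
          - x₃ * σ x₁ * σ (σ x₂), by ring⟩
      have := dvd_sub hdvddet h2
      simpa using (dvd_sub hdvddet h2)
    rcases (hXprime.dvd_mul.1 h1) with h | h
    · rcases (hXprime.dvd_mul.1 h) with h' | h'
      · exact h'
      · exact (hσdvd x₁).1 h'
    · exact (hσdvd x₁).1 ((hσdvd (σ x₁)).1 h)
  -- substitute
  obtain ⟨a, ha⟩ := hx₁
  obtain ⟨b, hb⟩ := hx₂
  obtain ⟨c, hc⟩ := hx₃
  have hσX : σ (X : Polynomial Fqr) = X := by simp [hσdef]
  have hfac : (M3 σ X x₁ x₂ x₃).det = X ^ 3 *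
      (a * σ a * σ (σ a) - a * σ b * (X * σ (σ c))
      - b * (X * σ c) * σ (σ a) + b * σ b * (X * σ (σ b))
      + c * (X * σ c) * (X * σ (σ c)) - c * σ a * (X * σ (σ b))) := by
    rw [hdetval, ha, hb, hc]
    simp only [map_mul, hσX]
    ring
  rw [hfac] at hdet
  set D := (a * σ a * σ (σ a) - a * σ b * (X * σ (σ c))
      - b * (X * σ c) * σ (σ a) + b * σ b * (X * σ (σ b))
      + c * (X * σ c) * (X * σ (σ c)) - c * σ a * (X * σ (σ b))) with hD
  clear_value D
  have h9 : (X : Polynomial Fqr) ^ 3 * ((X : Polynomial Fqr) ^ 6 * D ^ 3)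
      = (X : Polynomial Fqr) ^ 3 * 1 := by linear_combination hdet
  have hX3 : (X : Polynomial Fqr) ^ 3 ≠ 0 := pow_ne_zero _ Polynomial.X_ne_zero
  have h1 : (X : Polynomial Fqr) ^ 6 * D ^ 3 = 1 := mul_left_cancel₀ hX3 h9
  have : (X : Polynomial Fqr) ∣ 1 := ⟨X ^ 5 * D ^ 3, by rw [← h1]; ring⟩
  exact Polynomial.not_isUnit_X (isUnit_of_dvd_one this)
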